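/- arXiv:2006.08877 — 3 statements merged into one kernel-verified Lean document; each statement's English description precedes it below -/
import Mathlib

section
/- Let A be symmetric positive definite with inverse H, a a nonzero vector, c > 0, and A⁺ = A + c·aaᵀ. With s = Ha, y = A⁺s, ρ = 1/(sᵀy), the BFGS update H⁺ = (I − ρ s yᵀ) H (I − ρ y sᵀ) + ρ s sᵀ equals the Sherman–Morrison formula: H⁺ = H − H a (c^{-1} + aᵀ H a)^{-1} aᵀ H. -/
open Matrix

private lemma vmv_mulVec {n : ℕ} (u v x : Fin n → ℝ) :
    vecMulVec u v *ᵥ x = (v ⬝ᵥ x) • u := by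
  ext i
  simp [mulVec, dotProduct, vecMulVec_apply, Finset.mul_sum, mul_comm, mul_left_comm]

private lemma mul_vmv {n : ℕ} (M : Matrix (Fin n) (Fin n) ℝ) (u v : Fin n → ℝ) :
    M * vecMulVec u v = vecMulVec (M *ᵥ u) v := by
  ext i j
  simp [mul_apply, vecMulVec_apply, mulVec, dotProduct, Finset.sum_mul, mul_assoc]

private lemma vmv_mul {n : ℕ} (M : Matrix (Fin n) (Fin n) ℝ) (u v : Fin n → ℝ) :
    vecMulVec u v * M = vecMulVec u (v ᵥ* M) := by
  ext i j
  simp [mul_apply, vecMulVec_apply, vecMul, dotProduct, Finset.mul_sum, mul_assoc]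

private lemma vmv_mul_vmv {n : ℕ} (u v w x : Fin n → ℝ) :
    vecMulVec u v * vecMulVec w x = (v ⬝ᵥ w) • vecMulVec u x := by
  ext i j
  simp [mul_apply, vecMulVec_apply, dotProduct, Finset.sum_mul, Finset.mul_sum]
  congr 1; ext k; ring

private lemma smul_vmv {n : ℕ} (r : ℝ) (u v : Fin n → ℝ) :
    vecMulVec (r • u) v = r • vecMulVec u v := by
  ext i j; simp [vecMulVec_apply, mul_assoc]

private lemma vmv_smul {n : ℕ} (r : ℝ) (u v : Fin n → ℝ) :
    vecMulVec u (r • v) = r • vecMulVec u v := by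
  ext i j; simp [vecMulVec_apply]; ring

/-- Hessian-action BFGS update coincides with the Sherman–Morrison formula:
H⁺ = H − Ha (c⁻¹ + aᵀHa)⁻¹ aᵀH. -/
theorem bfgs_eq_sherman_morrison {n : ℕ} (A H Aplus Hplus : Matrix (Fin n) (Fin n) ℝ)
    (a s y : Fin n → ℝ) (c ρ : ℝ)
    (hA : A.PosDef) (hHA : H = A⁻¹)
    (ha : a ≠ 0) (hc : 0 < c)
    (hAplus : Aplus = A + c • vecMulVec a a)
    (hs : s = H *ᵥ a) (hy : y = Aplus *ᵥ s)
    (hρ : ρ = 1 / (s ⬝ᵥ y))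
    (hHplus : Hplus = (1 - ρ • vecMulVec s y) * H * (1 - ρ • vecMulVec y s)
      + ρ • vecMulVec s s) :
    Hplus = H - (c⁻¹ + a ⬝ᵥ (H *ᵥ a))⁻¹ • vecMulVec (H *ᵥ a) (a ᵥ* H) := by
  have hH : H.PosDef := hHA ▸ hA.inv
  have hHsym : Hᵀ = H := hH.isHermitian
  set t : ℝ := a ⬝ᵥ (H *ᵥ a) with hta
  have ht : 0 < t := by simpa using hH.dotProduct_mulVec_pos ha
  have hta' : a ⬝ᵥ s = t := by rw [hs]
  have hs' : a ᵥ* H = s := by rw [← hHsym, vecMul_transpose, hs]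
  have hAs : A *ᵥ s = a := by
    rw [hs, hHA, mulVec_mulVec, Matrix.mul_nonsing_inv A ((Matrix.isUnit_iff_isUnit_det A).mp hA.isUnit), one_mulVec]
  set k : ℝ := 1 + c * t with hk
  have hyk : y = k • a := by
    rw [hy, hAplus, add_mulVec, smul_mulVec, vmv_mulVec, hAs, hta', hk]
    ext i; simp; ring
  have hsy : s ⬝ᵥ y = k * t := by
    rw [hyk, dotProduct_smul, smul_eq_mul, dotProduct_comm, hta']
  have hkpos : 0 < k := by positivity
  have hρ' : ρ = 1 / (k * t) := by rw [hρ, hsy]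
  -- expand the BFGS product
  have hyH : y ᵥ* H = k • s := by
    rw [hyk, smul_vecMul, hs']
  have hHy : H *ᵥ y = k • s := by
    rw [hyk, mulVec_smul, hs]
  have h1 : ρ • vecMulVec s y * H = (ρ * k) • vecMulVec s s := by
    rw [smul_mul_assoc, vmv_mul, hyH, vmv_smul, smul_smul]
  have h2 : H * (ρ • vecMulVec y s) = (ρ * k) • vecMulVec s s := by
    rw [mul_smul_comm, mul_vmv, hHy, smul_vmv, smul_smul]
  have h3 : ((ρ * k) • vecMulVec s s) * (ρ • vecMulVec y s)
      = (ρ * k * (ρ * (k * t))) • vecMulVec s s := by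
    rw [smul_mul_assoc, mul_smul_comm, vmv_mul_vmv, hsy, smul_smul, smul_smul, mul_assoc (ρ * k)]
  have expand : Hplus = H - (ρ * k) • vecMulVec s s
      - ((ρ * k) • vecMulVec s s - (ρ * k * (ρ * (k * t))) • vecMulVec s s)
      + ρ • vecMulVec s s := by
    rw [hHplus, sub_mul, one_mul, h1, sub_mul, mul_sub, mul_one, h2, mul_sub, mul_one, h3]
  rw [expand, hs, hs', ← hs]
  have htne : t ≠ 0 := ht.ne'
  have hcne : c ≠ 0 := hc.ne'
  have hkne : k ≠ 0 := hkpos.ne'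
  have hct : c⁻¹ + t ≠ 0 := by positivity
  have hcoef : ρ - ρ * k - (ρ * k - ρ * k * (ρ * (k * t))) = -(c⁻¹ + t)⁻¹ := by
    rw [hρ', hk]
    field_simp
    ring
  ext i j
  simp [vecMulVec_apply, Matrix.add_apply, Matrix.sub_apply]
  linear_combination (s i * s j) * hcoef
end

section
/- Let B be symmetric positive definite with H = B^{-1}, and let s, y be vectors with sᵀy > 0 and yᵀHy / (sᵀy) ≤ 1/μ₁ for some μ₁ > 0. Then the BFGS update B⁺ = B − (B s sᵀ B)/(sᵀ B s) + (y yᵀ)/(sᵀ y) satisfies ‖B⁺‖ ≤ ‖B‖ (1 + 1/μ₁), where ‖·‖ is the spectral norm. -/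
open Matrix

noncomputable def specNorm {n : ℕ} (A : Matrix (Fin n) (Fin n) ℝ) : ℝ :=
  ‖Matrix.toEuclideanCLM (𝕜 := ℝ) (n := Fin n) A‖

open scoped RealInnerProductSpace

/-- A symmetric positive operator with quadratic form bounded by `c * ‖x‖²`
has operator norm at most `c`. -/
lemma opnorm_le_of_quadform {E : Type*} [NormedAddCommGroup E] [InnerProductSpace ℝ E]
    (T : E →L[ℝ] E) (hsymm : ∀ u v : E, ⟪T u, v⟫ = ⟪u, T v⟫)
    {c : ℝ} (hc : 0 ≤ c)
    (hpos : ∀ u : E, 0 ≤ ⟪T u, u⟫)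
    (hub : ∀ u : E, ⟪T u, u⟫ ≤ c * ‖u‖ ^ 2) : ‖T‖ ≤ c := by
  refine T.opNorm_le_bound hc fun x => ?_
  by_cases hTx : T x = 0
  · rw [hTx, norm_zero]; positivity
  have hTx' : 0 < ‖T x‖ := norm_pos_iff.mpr hTx
  have hx : x ≠ 0 := by rintro rfl; simp at hTx
  have hx' : 0 < ‖x‖ := norm_pos_iff.mpr hx
  set k : ℝ := ‖x‖ / ‖T x‖ with hk
  have hk0 : 0 < k := div_pos hx' hTx'
  set y : E := k • T x with hy
  have hyn : ‖y‖ = ‖x‖ := by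
    rw [hy, norm_smul, Real.norm_eq_abs, abs_of_pos hk0, hk, div_mul_cancel₀ _ hTx'.ne']
  have e1 : ⟪T (x + y), x + y⟫ - ⟪T (x - y), x - y⟫ = 4 * ⟪T x, y⟫ := by
    have h1 : ⟪T y, x⟫ = ⟪y, T x⟫ := hsymm y x
    simp only [map_add, map_sub, inner_add_left, inner_add_right, inner_sub_left,
      inner_sub_right]
    rw [h1, real_inner_comm y (T x)]
    ring
  have e2 : ⟪T x, y⟫ = ‖x‖ * ‖T x‖ := by
    rw [hy, real_inner_smul_right, real_inner_self_eq_norm_sq, hk]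
    field_simp
  have key : 4 * (‖x‖ * ‖T x‖) ≤ c * (2 * ‖x‖) ^ 2 := by
    calc 4 * (‖x‖ * ‖T x‖) = ⟪T (x + y), x + y⟫ - ⟪T (x - y), x - y⟫ := by rw [e1, e2]
      _ ≤ ⟪T (x + y), x + y⟫ := by linarith [hpos (x - y)]
      _ ≤ c * ‖x + y‖ ^ 2 := hub _
      _ ≤ c * (2 * ‖x‖) ^ 2 := by
          apply mul_le_mul_of_nonneg_left _ hc
          apply pow_le_pow_left₀ (norm_nonneg _)
          calc ‖x + y‖ ≤ ‖x‖ + ‖y‖ := norm_add_le _ _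
            _ = 2 * ‖x‖ := by rw [hyn]; ring
  nlinarith [hx'.le, hTx'.le]

/-- Cauchy–Schwarz inequality for the bilinear form of a real positive semidefinite matrix. -/
lemma posSemidef_cauchy {n : ℕ} {B : Matrix (Fin n) (Fin n) ℝ} (hB : B.PosSemidef)
    (u v : Fin n → ℝ) :
    (u ⬝ᵥ (B *ᵥ v)) ^ 2 ≤ (u ⬝ᵥ (B *ᵥ u)) * (v ⬝ᵥ (B *ᵥ v)) := by
  have hBt : Bᵀ = B := by
    ext i j
    have := congrFun (congrFun hB.1 i) j
    simpa [Matrix.conjTranspose_apply] using this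
  have hsy : ∀ a b : Fin n → ℝ, a ⬝ᵥ (B *ᵥ b) = b ⬝ᵥ (B *ᵥ a) := by
    intro a b
    rw [dotProduct_mulVec a B b, ← mulVec_transpose, hBt, dotProduct_comm]
  have hq : ∀ w : Fin n → ℝ, 0 ≤ w ⬝ᵥ (B *ᵥ w) := by
    intro w
    simpa using hB.dotProduct_mulVec_nonneg w
  have h := discrim_le_zero (a := v ⬝ᵥ (B *ᵥ v)) (b := 2 * (u ⬝ᵥ (B *ᵥ v)))
    (c := u ⬝ᵥ (B *ᵥ u)) ?_
  · rw [discrim] at h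
    nlinarith [h]
  · intro t
    have expand : (u + t • v) ⬝ᵥ (B *ᵥ (u + t • v)) =
        (v ⬝ᵥ (B *ᵥ v)) * (t * t) + 2 * (u ⬝ᵥ (B *ᵥ v)) * t + u ⬝ᵥ (B *ᵥ u) := by
      simp only [mulVec_add, mulVec_smul, dotProduct_add, dotProduct_smul, add_dotProduct,
        smul_dotProduct, smul_eq_mul]
      rw [hsy v u]
      ring
    rw [← expand]
    exact hq _

lemma vecMulVec_mulVec' {n : ℕ} (w v u : Fin n → ℝ) :
    vecMulVec w v *ᵥ u = (v ⬝ᵥ u) • w := by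
  ext i
  simp only [Matrix.mulVec, Matrix.vecMulVec_apply, dotProduct, Pi.smul_apply,
    smul_eq_mul, Finset.sum_mul]
  exact Finset.sum_congr rfl fun j _ => by ring

/-- quadratic form of a matrix through `toEuclideanCLM`. -/
lemma inner_toEuclideanCLM {n : ℕ} (A : Matrix (Fin n) (Fin n) ℝ)
    (x : EuclideanSpace ℝ (Fin n)) :
    ⟪Matrix.toEuclideanCLM (𝕜 := ℝ) (n := Fin n) A x, x⟫ =
      (A *ᵥ (WithLp.equiv 2 _ x)) ⬝ᵥ (WithLp.equiv 2 _ x) := by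
  set u := WithLp.equiv 2 (Fin n → ℝ) x with hu
  have hx : x = (WithLp.equiv 2 (Fin n → ℝ)).symm u := by simp [hu]
  rw [hx]
  show u ⬝ᵥ star (A *ᵥ u) = (A *ᵥ u) ⬝ᵥ u
  rw [star_trivial, dotProduct_comm]

lemma norm_sq_euclidean {n : ℕ} (x : EuclideanSpace ℝ (Fin n)) :
    ‖x‖ ^ 2 = (WithLp.equiv 2 _ x) ⬝ᵥ (WithLp.equiv 2 _ x) := by
  rw [← real_inner_self_eq_norm_sq]
  rfl

lemma quadform_le_specNorm {n : ℕ} (A : Matrix (Fin n) (Fin n) ℝ) (u : Fin n → ℝ) :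
    (A *ᵥ u) ⬝ᵥ u ≤ specNorm A * (u ⬝ᵥ u) := by
  set x : EuclideanSpace ℝ (Fin n) := (WithLp.equiv 2 (Fin n → ℝ)).symm u with hx
  have h1 : (A *ᵥ u) ⬝ᵥ u = ⟪Matrix.toEuclideanCLM (𝕜 := ℝ) (n := Fin n) A x, x⟫ := by
    rw [inner_toEuclideanCLM]; simp [hx]
  have h2 : u ⬝ᵥ u = ‖x‖ ^ 2 := by rw [norm_sq_euclidean]; simp [hx]
  rw [h1, h2]
  calc ⟪Matrix.toEuclideanCLM (𝕜 := ℝ) (n := Fin n) A x, x⟫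
      ≤ ‖Matrix.toEuclideanCLM (𝕜 := ℝ) (n := Fin n) A x‖ * ‖x‖ := real_inner_le_norm _ _
    _ ≤ ‖Matrix.toEuclideanCLM (𝕜 := ℝ) (n := Fin n) A‖ * ‖x‖ * ‖x‖ :=
        mul_le_mul_of_nonneg_right ((Matrix.toEuclideanCLM (𝕜 := ℝ) A).le_opNorm x)
          (norm_nonneg x)
    _ = specNorm A * ‖x‖ ^ 2 := by rw [specNorm]; ring

/-- spectral norm bound via the quadratic form, for symmetric matrices with
positive semidefinite quadratic form. -/
lemma specNorm_le_of_quadform {n : ℕ} (A : Matrix (Fin n) (Fin n) ℝ) (hAt : Aᵀ = A)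
    {c : ℝ} (hc : 0 ≤ c)
    (hpos : ∀ u : Fin n → ℝ, 0 ≤ (A *ᵥ u) ⬝ᵥ u)
    (hub : ∀ u : Fin n → ℝ, (A *ᵥ u) ⬝ᵥ u ≤ c * (u ⬝ᵥ u)) : specNorm A ≤ c := by
  apply opnorm_le_of_quadform _ _ hc
  · intro x
    rw [inner_toEuclideanCLM]
    exact hpos _
  · intro x
    rw [inner_toEuclideanCLM, norm_sq_euclidean]
    exact hub _
  · intro x y
    set u := WithLp.equiv 2 (Fin n → ℝ) x with hu
    set v := WithLp.equiv 2 (Fin n → ℝ) y with hv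
    have hx : x = (WithLp.equiv 2 (Fin n → ℝ)).symm u := by simp [hu]
    have hy : y = (WithLp.equiv 2 (Fin n → ℝ)).symm v := by simp [hv]
    rw [hx, hy]
    show v ⬝ᵥ star (A *ᵥ u) = (A *ᵥ v) ⬝ᵥ star u
    simp only [star_trivial]
    rw [dotProduct_comm v, dotProduct_comm (A *ᵥ v)]
    rw [dotProduct_mulVec u A v, ← mulVec_transpose, hAt, dotProduct_comm]

/-- Spectral-norm growth bound for the BFGS update of B under the curvature
condition yᵀHy/(sᵀy) ≤ 1/μ₁. -/
theorem bfgs_B_norm_bound {n : ℕ} (B H Bplus : Matrix (Fin n) (Fin n) ℝ)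
    (s y : Fin n → ℝ) (μ₁ : ℝ)
    (hB : B.PosDef) (hHB : H = B⁻¹)
    (hμ₁ : 0 < μ₁)
    (hsy : 0 < s ⬝ᵥ y)
    (hcurv : y ⬝ᵥ (H *ᵥ y) / (s ⬝ᵥ y) ≤ 1 / μ₁)
    (hBplus : Bplus = B - (1 / (s ⬝ᵥ (B *ᵥ s))) • vecMulVec (B *ᵥ s) (s ᵥ* B)
      + (1 / (s ⬝ᵥ y)) • vecMulVec y y) :
    specNorm Bplus ≤ specNorm B * (1 + 1 / μ₁) := by
  classical
  have hBt : Bᵀ = B := by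
    ext i j
    have := congrFun (congrFun hB.1 i) j
    simpa [Matrix.conjTranspose_apply] using this
  have hs0 : s ≠ 0 := by rintro rfl; simp at hsy
  have hσ : 0 < s ⬝ᵥ (B *ᵥ s) := by simpa using hB.dotProduct_mulVec_pos hs0
  have hdet : IsUnit B.det := hB.det_pos.ne'.isUnit
  have hBH : B * H = 1 := by rw [hHB]; exact Matrix.mul_nonsing_inv B hdet
  have hsvB : s ᵥ* B = B *ᵥ s := by rw [← hBt, Matrix.mulVec_transpose, hBt]
  have hsB : (0:ℝ) ≤ specNorm B := norm_nonneg _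
  have hsymdot : ∀ a b : Fin n → ℝ, a ⬝ᵥ (B *ᵥ b) = b ⬝ᵥ (B *ᵥ a) := by
    intro a b
    rw [dotProduct_mulVec a B b, ← mulVec_transpose, hBt, dotProduct_comm]
  set σ := s ⬝ᵥ (B *ᵥ s) with hσdef
  set M1 := B - (1 / σ) • vecMulVec (B *ᵥ s) (s ᵥ* B) with hM1
  set M2 := (1 / (s ⬝ᵥ y)) • vecMulVec y y with hM2
  have hsplit : specNorm Bplus ≤ specNorm M1 + specNorm M2 := by
    rw [hBplus]
    unfold specNorm
    rw [map_add]
    exact norm_add_le _ _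
  -- bound on M1
  have hM1t : M1ᵀ = M1 := by
    rw [hM1, transpose_sub, transpose_smul, hBt, hsvB]
    congr 2
    ext i j
    simp [Matrix.vecMulVec_apply, mul_comm]
  have hM1q : ∀ u : Fin n → ℝ,
      (M1 *ᵥ u) ⬝ᵥ u = u ⬝ᵥ (B *ᵥ u) - (1 / σ) * (s ⬝ᵥ (B *ᵥ u)) ^ 2 := by
    intro u
    have hd : (B *ᵥ s) ⬝ᵥ u = s ⬝ᵥ (B *ᵥ u) := by
      rw [dotProduct_comm, hsymdot u s]
    rw [hM1, hsvB, sub_mulVec, smul_mulVec, vecMulVec_mulVec', hd,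
      sub_dotProduct, smul_dotProduct, smul_dotProduct, smul_eq_mul, smul_eq_mul,
      dotProduct_comm (B *ᵥ u) u, hd]
    ring
  have hbound1 : specNorm M1 ≤ specNorm B := by
    apply specNorm_le_of_quadform M1 hM1t hsB
    · intro u
      rw [hM1q u]
      have hcs := posSemidef_cauchy hB.posSemidef s u
      have huu : 0 ≤ u ⬝ᵥ (B *ᵥ u) := by simpa using hB.posSemidef.dotProduct_mulVec_nonneg u
      rw [← hσdef] at hcs
      have h1σ : 0 < 1 / σ := by positivity
      have hmul := mul_le_mul_of_nonneg_left hcs h1σ.le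
      have hcancel : 1 / σ * (σ * (u ⬝ᵥ (B *ᵥ u))) = u ⬝ᵥ (B *ᵥ u) := by
        field_simp
      linarith
    · intro u
      rw [hM1q u]
      have h2 : u ⬝ᵥ (B *ᵥ u) ≤ specNorm B * (u ⬝ᵥ u) := by
        rw [dotProduct_comm]
        exact quadform_le_specNorm B u
      have h1σ : 0 < 1 / σ := by positivity
      nlinarith [sq_nonneg (s ⬝ᵥ (B *ᵥ u))]
  -- bound on M2
  have hone : (1 : Matrix (Fin n) (Fin n) ℝ).PosSemidef := by
    exact Matrix.PosSemidef.one
  have hyu : ∀ u : Fin n → ℝ, (y ⬝ᵥ u) ^ 2 ≤ (y ⬝ᵥ y) * (u ⬝ᵥ u) := by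
    intro u
    have := posSemidef_cauchy hone y u
    simpa [Matrix.one_mulVec] using this
  set e := y ⬝ᵥ (H *ᵥ y) with he
  have hHpd : H.PosDef := by rw [hHB]; exact hB.inv
  have he0 : 0 ≤ e := by simpa [he] using hHpd.posSemidef.dotProduct_mulVec_nonneg y
  have hBHy : B *ᵥ (H *ᵥ y) = y := by
    rw [Matrix.mulVec_mulVec, hBH, Matrix.one_mulVec]
  have he1 : (y ⬝ᵥ y) ^ 2 ≤ e * (y ⬝ᵥ (B *ᵥ y)) := by
    have hcs := posSemidef_cauchy hB.posSemidef (H *ᵥ y) y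
    have h1 : (H *ᵥ y) ⬝ᵥ (B *ᵥ y) = y ⬝ᵥ y := by
      rw [hsymdot (H *ᵥ y) y, hBHy]
    have h2 : (H *ᵥ y) ⬝ᵥ (B *ᵥ (H *ᵥ y)) = e := by
      rw [hBHy, dotProduct_comm, he]
    rw [h1, h2] at hcs
    exact hcs
  have he2 : y ⬝ᵥ (B *ᵥ y) ≤ specNorm B * (y ⬝ᵥ y) := by
    rw [dotProduct_comm]
    exact quadform_le_specNorm B y
  have hyy0 : 0 ≤ y ⬝ᵥ y := by simpa using hone.dotProduct_mulVec_nonneg y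
  have hyyB : y ⬝ᵥ y ≤ specNorm B * e := by
    rcases eq_or_lt_of_le hyy0 with h | h
    · rw [← h]; positivity
    · nlinarith
  have he3 : e ≤ (s ⬝ᵥ y) / μ₁ := by
    rw [le_div_iff₀ hμ₁]
    have := (div_le_div_iff₀ hsy hμ₁).mp hcurv
    linarith
  have hM2t : M2ᵀ = M2 := by
    rw [hM2, transpose_smul]
    congr 1
    ext i j
    simp [Matrix.vecMulVec_apply, mul_comm]
  have hM2q : ∀ u : Fin n → ℝ,
      (M2 *ᵥ u) ⬝ᵥ u = (1 / (s ⬝ᵥ y)) * (y ⬝ᵥ u) ^ 2 := by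
    intro u
    rw [hM2, smul_mulVec, vecMulVec_mulVec', smul_dotProduct, smul_dotProduct,
      smul_eq_mul, smul_eq_mul, dotProduct_comm y u]
    ring
  have hbound2 : specNorm M2 ≤ specNorm B * (1 / μ₁) := by
    apply specNorm_le_of_quadform M2 hM2t (by positivity)
    · intro u
      rw [hM2q u]
      have : 0 ≤ (y ⬝ᵥ u) ^ 2 := sq_nonneg _
      positivity
    · intro u
      rw [hM2q u]
      have huu : 0 ≤ u ⬝ᵥ u := by simpa using hone.dotProduct_mulVec_nonneg u
      have h1 : (y ⬝ᵥ u) ^ 2 ≤ (specNorm B * e) * (u ⬝ᵥ u) :=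
        le_trans (hyu u) (mul_le_mul_of_nonneg_right hyyB huu)
      have h2 : (specNorm B * e) * (u ⬝ᵥ u) ≤ (specNorm B * ((s ⬝ᵥ y) / μ₁)) * (u ⬝ᵥ u) :=
        mul_le_mul_of_nonneg_right (mul_le_mul_of_nonneg_left he3 hsB) huu
      rw [one_div_mul_eq_div, div_le_iff₀ hsy]
      calc (y ⬝ᵥ u) ^ 2 ≤ (specNorm B * ((s ⬝ᵥ y) / μ₁)) * (u ⬝ᵥ u) := le_trans h1 h2
        _ = specNorm B * (1 / μ₁) * (u ⬝ᵥ u) * (s ⬝ᵥ y) := by field_simp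
  calc specNorm Bplus ≤ specNorm M1 + specNorm M2 := hsplit
    _ ≤ specNorm B + specNorm B * (1 / μ₁) := add_le_add hbound1 hbound2
    _ = specNorm B * (1 + 1 / μ₁) := by ring
end

section
/- Let H be symmetric positive definite, and s, y vectors with sᵀy > 0, yᵀHy/(sᵀy) ≤ 1/μ₁ and sᵀs/(sᵀy) ≤ 1/μ₂ for positive constants μ₁, μ₂. Then the BFGS inverse update H⁺ = (I − ρ s yᵀ) H (I − ρ y sᵀ) + ρ s sᵀ with ρ = 1/(sᵀy) satisfies ‖H⁺‖ ≤ (‖H^{1/2}‖ + 1/√(μ₁μ₂))² + 1/μ₂ in spectral norm. -/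
open Matrix
open scoped Matrix.Norms.L2Operator

/-- The positive semidefinite square root, as `Matrix.PosSemidef.sqrt` was defined in the older Mathlib. -/
noncomputable def posSemidefSqrt {n : ℕ} {A : Matrix (Fin n) (Fin n) ℝ} (hA : A.PosSemidef) :
    Matrix (Fin n) (Fin n) ℝ :=
  hA.1.eigenvectorUnitary.1 * diagonal ((↑) ∘ (√·) ∘ hA.1.eigenvalues) *
    (star hA.1.eigenvectorUnitary : Matrix (Fin n) (Fin n) ℝ)

private lemma euc_norm_eq {n : ℕ} (u : Fin n → ℝ) :
    ‖(WithLp.equiv 2 (Fin n → ℝ)).symm u‖ = Real.sqrt (u ⬝ᵥ u) := by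
  have h : (u ⬝ᵥ u : ℝ)
      = inner ℝ ((WithLp.equiv 2 (Fin n → ℝ)).symm u) ((WithLp.equiv 2 (Fin n → ℝ)).symm u) := by
    rw [WithLp.equiv_symm_apply, EuclideanSpace.inner_toLp_toLp]; simp [star_trivial]
  rw [h, real_inner_self_eq_norm_mul_norm, Real.sqrt_mul_self (norm_nonneg _)]

private lemma vecMulVec_norm_le {n : ℕ} (u v : Fin n → ℝ) :
    ‖vecMulVec u v‖ ≤ Real.sqrt (u ⬝ᵥ u) * Real.sqrt (v ⬝ᵥ v) := by
  rw [← euc_norm_eq, ← euc_norm_eq, cstar_norm_def]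
  apply ContinuousLinearMap.opNorm_le_bound _ (by positivity)
  intro x
  have h1 : toEuclideanCLM (𝕜 := ℝ) (vecMulVec u v) x
      = (WithLp.equiv 2 (Fin n → ℝ)).symm ((v ⬝ᵥ (WithLp.equiv 2 (Fin n → ℝ) x)) • u) := by
    apply (WithLp.equiv 2 (Fin n → ℝ)).injective
    rw [WithLp.equiv_symm_apply, WithLp.equiv_apply, ofLp_toEuclideanCLM]
    simp only [WithLp.equiv_apply, WithLp.ofLp_toLp]
    ext i
    simp [mulVec, dotProduct, vecMulVec_apply, Finset.mul_sum, mul_comm, mul_left_comm, mul_assoc]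
  have h2 : v ⬝ᵥ (WithLp.equiv 2 (Fin n → ℝ) x)
      = inner ℝ ((WithLp.equiv 2 (Fin n → ℝ)).symm v) x := by
    rw [← (WithLp.equiv 2 (Fin n → ℝ)).symm_apply_apply x, WithLp.equiv_symm_apply,
      EuclideanSpace.inner_toLp_toLp]
    simp [star_trivial, dotProduct_comm]
  rw [h1]
  change ‖(v ⬝ᵥ (WithLp.equiv 2 (Fin n → ℝ) x)) • (WithLp.equiv 2 (Fin n → ℝ)).symm u‖ ≤ _
  rw [norm_smul, h2, Real.norm_eq_abs]
  calc |inner ℝ ((WithLp.equiv 2 (Fin n → ℝ)).symm v) x| * ‖(WithLp.equiv 2 (Fin n → ℝ)).symm u‖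
      ≤ (‖(WithLp.equiv 2 (Fin n → ℝ)).symm v‖ * ‖x‖) * ‖(WithLp.equiv 2 (Fin n → ℝ)).symm u‖ := by
        gcongr; exact abs_real_inner_le_norm _ _
    _ = ‖(WithLp.equiv 2 (Fin n → ℝ)).symm u‖ * ‖(WithLp.equiv 2 (Fin n → ℝ)).symm v‖ * ‖x‖ := by
        ring

private lemma mul_vecMulVec {n : ℕ} (A : Matrix (Fin n) (Fin n) ℝ) (u v : Fin n → ℝ) :
    A * vecMulVec u v = vecMulVec (A *ᵥ u) v := by
  ext i j
  simp [mul_apply, vecMulVec_apply, mulVec, dotProduct, Finset.sum_mul, mul_assoc]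

/-- Spectral-norm bound for the BFGS inverse update under the double-damping
curvature conditions: ‖H⁺‖ ≤ (‖H^{1/2}‖ + 1/√(μ₁μ₂))² + 1/μ₂. -/
theorem bfgs_H_norm_bound {n : ℕ} (H Hplus : Matrix (Fin n) (Fin n) ℝ)
    (s y : Fin n → ℝ) (μ₁ μ₂ ρ : ℝ)
    (hH : H.PosDef)
    (hμ₁ : 0 < μ₁) (hμ₂ : 0 < μ₂)
    (hsy : 0 < s ⬝ᵥ y)
    (hcurv₁ : y ⬝ᵥ (H *ᵥ y) / (s ⬝ᵥ y) ≤ 1 / μ₁)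
    (hcurv₂ : s ⬝ᵥ s / (s ⬝ᵥ y) ≤ 1 / μ₂)
    (hρ : ρ = 1 / (s ⬝ᵥ y))
    (hHplus : Hplus = (1 - ρ • vecMulVec s y) * H * (1 - ρ • vecMulVec y s)
      + ρ • vecMulVec s s) :
    specNorm Hplus ≤ (specNorm (posSemidefSqrt hH.posSemidef) + 1 / Real.sqrt (μ₁ * μ₂)) ^ 2 + 1 / μ₂ := by
  have hspec : ∀ A : Matrix (Fin n) (Fin n) ℝ, specNorm A = ‖A‖ := fun A => rfl
  set q := posSemidefSqrt hH.posSemidef with hq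
  have hqherm : q.IsHermitian := by
    have := isHermitian_mul_mul_conjTranspose
      (hH.posSemidef.1.eigenvectorUnitary : Matrix (Fin n) (Fin n) ℝ)
      (isHermitian_diagonal ((↑) ∘ (√·) ∘ hH.posSemidef.1.eigenvalues : Fin n → ℝ))
    simpa [hq, posSemidefSqrt, star_eq_conjTranspose] using this
  have hqq : q * q = H := by
    have hU := Unitary.star_mul_self hH.posSemidef.1.eigenvectorUnitary
    have hD : diagonal ((↑) ∘ (√·) ∘ hH.posSemidef.1.eigenvalues : Fin n → ℝ)
        * diagonal ((↑) ∘ (√·) ∘ hH.posSemidef.1.eigenvalues : Fin n → ℝ)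
        = diagonal (RCLike.ofReal ∘ hH.posSemidef.1.eigenvalues) := by
      rw [diagonal_mul_diagonal]
      congr 1; funext i
      simp [Real.mul_self_sqrt (hH.posSemidef.eigenvalues_nonneg i)]
    conv_rhs => rw [hH.posSemidef.1.spectral_theorem, Unitary.conjStarAlgAut_apply]
    rw [hq, posSemidefSqrt]
    have hU' : (star hH.posSemidef.1.eigenvectorUnitary : Matrix (Fin n) (Fin n) ℝ)
        * (hH.posSemidef.1.eigenvectorUnitary : Matrix (Fin n) (Fin n) ℝ) = 1 := by
      exact congrArg Subtype.val hU
    calc _ = (hH.posSemidef.1.eigenvectorUnitary : Matrix (Fin n) (Fin n) ℝ)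
          * (diagonal ((↑) ∘ (√·) ∘ hH.posSemidef.1.eigenvalues : Fin n → ℝ)
          * ((star hH.posSemidef.1.eigenvectorUnitary : Matrix (Fin n) (Fin n) ℝ)
            * (hH.posSemidef.1.eigenvectorUnitary : Matrix (Fin n) (Fin n) ℝ))
          * diagonal ((↑) ∘ (√·) ∘ hH.posSemidef.1.eigenvalues : Fin n → ℝ))
          * (star hH.posSemidef.1.eigenvectorUnitary : Matrix (Fin n) (Fin n) ℝ) := by
          simp only [mul_assoc]
      _ = _ := by rw [hU', mul_one, hD]
  set b := s ⬝ᵥ y with hb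
  have hρ0 : 0 ≤ ρ := by rw [hρ]; positivity
  -- nonnegativity facts
  have ha0 : 0 ≤ y ⬝ᵥ (H *ᵥ y) := by simpa [star_trivial] using hH.posSemidef.dotProduct_mulVec_nonneg y
  have hc0 : 0 ≤ s ⬝ᵥ s := by
    simpa [dotProduct] using Finset.sum_nonneg fun i _ => mul_self_nonneg (s i)
  -- the key factorization
  set M := q * (1 - ρ • vecMulVec y s) with hM
  have hfact : Hplus = Mᴴ * M + ρ • vecMulVec s s := by
    rw [hHplus, hM]
    congr 1
    have hvT : (vecMulVec y s)ᴴ = vecMulVec s y := by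
      ext i j; simp [conjTranspose_apply, vecMulVec_apply, mul_comm]
    have hMH : (q * (1 - ρ • vecMulVec y s))ᴴ = (1 - ρ • vecMulVec s y) * q := by
      rw [conjTranspose_mul, conjTranspose_sub, conjTranspose_one, conjTranspose_smul, hvT,
        hqherm.eq, star_trivial]
    rw [hMH]
    simp only [← hqq, mul_assoc]
  -- u = q y
  set u := q *ᵥ y with hu
  have huu : u ⬝ᵥ u = y ⬝ᵥ (H *ᵥ y) := by
    have h1 : u ᵥ* q = H *ᵥ y := by
      rw [← mulVec_transpose, ← hqherm.eq]
      show qᴴᵀ *ᵥ u = H *ᵥ y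
      have : qᴴᵀ = q := by ext i j; simp [conjTranspose_apply]
      rw [this, hu, mulVec_mulVec, hqq]
    calc u ⬝ᵥ u = u ⬝ᵥ (q *ᵥ y) := rfl
      _ = (u ᵥ* q) ⬝ᵥ y := dotProduct_mulVec u q y
      _ = (H *ᵥ y) ⬝ᵥ y := by rw [h1]
      _ = y ⬝ᵥ (H *ᵥ y) := dotProduct_comm _ _
  -- M as a perturbation of q
  have hMeq : M = q - ρ • vecMulVec u s := by
    rw [hM, mul_sub, mul_one, mul_smul_comm, _root_.mul_vecMulVec]
  -- bound on ‖M‖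
  have hab : y ⬝ᵥ (H *ᵥ y) ≤ b / μ₁ := by
    rw [le_div_iff₀ hμ₁]
    rw [div_le_div_iff₀ hsy hμ₁] at hcurv₁
    linarith
  have hcb : s ⬝ᵥ s ≤ b / μ₂ := by
    rw [le_div_iff₀ hμ₂]
    rw [div_le_div_iff₀ hsy hμ₂] at hcurv₂
    linarith
  have hsqrt : Real.sqrt (y ⬝ᵥ (H *ᵥ y)) * Real.sqrt (s ⬝ᵥ s) ≤ b / Real.sqrt (μ₁ * μ₂) := by
    calc Real.sqrt (y ⬝ᵥ (H *ᵥ y)) * Real.sqrt (s ⬝ᵥ s)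
        ≤ Real.sqrt (b / μ₁) * Real.sqrt (b / μ₂) := by
          exact mul_le_mul (Real.sqrt_le_sqrt hab) (Real.sqrt_le_sqrt hcb)
            (Real.sqrt_nonneg _) (Real.sqrt_nonneg _)
      _ = Real.sqrt (b ^ 2 / (μ₁ * μ₂)) := by
          rw [← Real.sqrt_mul (by positivity)]; ring_nf
      _ = b / Real.sqrt (μ₁ * μ₂) := by
          rw [Real.sqrt_div (by positivity), Real.sqrt_sq hsy.le]
  have hρterm : ρ * (Real.sqrt (u ⬝ᵥ u) * Real.sqrt (s ⬝ᵥ s)) ≤ 1 / Real.sqrt (μ₁ * μ₂) := by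
    rw [huu, hρ]
    calc (1 / b) * (Real.sqrt (y ⬝ᵥ (H *ᵥ y)) * Real.sqrt (s ⬝ᵥ s))
        ≤ (1 / b) * (b / Real.sqrt (μ₁ * μ₂)) := by
          gcongr
      _ = 1 / Real.sqrt (μ₁ * μ₂) := by field_simp
  have hMnorm : ‖M‖ ≤ ‖q‖ + 1 / Real.sqrt (μ₁ * μ₂) := by
    calc ‖M‖ = ‖q - ρ • vecMulVec u s‖ := by rw [hMeq]
      _ ≤ ‖q‖ + ‖ρ • vecMulVec u s‖ := norm_sub_le _ _
      _ = ‖q‖ + ρ * ‖vecMulVec u s‖ := by rw [norm_smul, Real.norm_eq_abs, abs_of_nonneg hρ0]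
      _ ≤ ‖q‖ + ρ * (Real.sqrt (u ⬝ᵥ u) * Real.sqrt (s ⬝ᵥ s)) := by
          gcongr; exact vecMulVec_norm_le u s
      _ ≤ ‖q‖ + 1 / Real.sqrt (μ₁ * μ₂) := by linarith [hρterm]
  -- bound on second term
  have hsecond : ρ * ‖vecMulVec s s‖ ≤ 1 / μ₂ := by
    calc ρ * ‖vecMulVec s s‖ ≤ ρ * (Real.sqrt (s ⬝ᵥ s) * Real.sqrt (s ⬝ᵥ s)) := by
          gcongr; exact vecMulVec_norm_le s s
      _ = ρ * (s ⬝ᵥ s) := by rw [Real.mul_self_sqrt hc0]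
      _ = (s ⬝ᵥ s) / b := by rw [hρ]; ring
      _ ≤ 1 / μ₂ := hcurv₂
  -- combine
  rw [hspec, hspec, hfact]
  calc ‖Mᴴ * M + ρ • vecMulVec s s‖
      ≤ ‖Mᴴ * M‖ + ‖ρ • vecMulVec s s‖ := norm_add_le _ _
    _ = ‖M‖ * ‖M‖ + ρ * ‖vecMulVec s s‖ := by
        rw [l2_opNorm_conjTranspose_mul_self, norm_smul, Real.norm_eq_abs, abs_of_nonneg hρ0]
    _ ≤ (‖q‖ + 1 / Real.sqrt (μ₁ * μ₂)) ^ 2 + 1 / μ₂ := by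
        have h1 : ‖M‖ * ‖M‖ ≤ (‖q‖ + 1 / Real.sqrt (μ₁ * μ₂)) ^ 2 := by
          rw [sq]
          exact mul_le_mul hMnorm hMnorm (norm_nonneg _)
            (le_trans (norm_nonneg _) hMnorm)
        linarith [hsecond]
end
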